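/- Let p be a prime, let N ∈ pℤ_p, and let φ ∈ (X,Y)²·ℤ_p[[X,Y]] be divisible in ℤ_p[[X,Y]] by (1+X)^N − (1+Y). Then φ(X,0) ≡ 0 modulo the ideal (p, X^{p+1}) of ℤ_p[[X]]. -/

import Mathlib

open scoped Classical

noncomputable section

variable (p : ℕ) [Fact p.Prime]

/-- The two-variable power series `(1 + X_i)^N = ∑_k C(N,k) X_i^k` for `N ∈ ℤ_p`. -/
noncomputable def binomSer (i : Fin 2) (N : ℤ_[p]) : MvPowerSeries (Fin 2) ℤ_[p] :=
  fun d => if Finsupp.single i (d i) = d then Ring.choose N (d i) else 0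

/-- The specialization `φ(X,0)` of a two-variable power series. -/
noncomputable def specX {R : Type*} [CommRing R] (φ : MvPowerSeries (Fin 2) R) :
    PowerSeries R :=
  PowerSeries.mk fun k => MvPowerSeries.coeff (R := R) (Finsupp.single 0 k) φ

section Aux

variable {R : Type*} [CommRing R]

lemma coeff_specX (φ : MvPowerSeries (Fin 2) R) (k : ℕ) :
    PowerSeries.coeff (R := R) k (specX φ) = MvPowerSeries.coeff (R := R) (Finsupp.single 0 k) φ :=
  PowerSeries.coeff_mk _ _

lemma fin2_single (d : Fin 2 →₀ ℕ) (h : d 1 = 0) : Finsupp.single (0 : Fin 2) (d 0) = d := by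
  ext i
  fin_cases i <;> simp [h, Finsupp.single_apply]

lemma specX_mul (a b : MvPowerSeries (Fin 2) R) :
    specX (a * b) = specX a * specX b := by
  ext k
  rw [PowerSeries.coeff_mul, coeff_specX, MvPowerSeries.coeff_mul]
  refine Finset.sum_nbij' (fun x => (x.1 0, x.2 0))
    (fun y => (Finsupp.single 0 y.1, Finsupp.single 0 y.2)) ?_ ?_ ?_ ?_ ?_
  · intro x hx
    rw [Finset.HasAntidiagonal.mem_antidiagonal] at hx ⊢
    have := congrArg (fun f : Fin 2 →₀ ℕ => f 0) hx
    simpa using this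
  · intro y hy
    rw [Finset.HasAntidiagonal.mem_antidiagonal] at hy ⊢
    rw [← Finsupp.single_add, hy]
  · intro x hx
    rw [Finset.HasAntidiagonal.mem_antidiagonal] at hx
    have h1 : x.1 1 + x.2 1 = 0 := by
      have := congrArg (fun f : Fin 2 →₀ ℕ => f 1) hx
      simpa [Finsupp.single_apply] using this
    have e1 : Finsupp.single (0 : Fin 2) (x.1 0) = x.1 := fin2_single _ (by omega)
    have e2 : Finsupp.single (0 : Fin 2) (x.2 0) = x.2 := fin2_single _ (by omega)
    exact Prod.ext e1 e2
  · intro y _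
    simp
  · intro x hx
    rw [Finset.HasAntidiagonal.mem_antidiagonal] at hx
    have h1 : x.1 1 + x.2 1 = 0 := by
      have := congrArg (fun f : Fin 2 →₀ ℕ => f 1) hx
      simpa [Finsupp.single_apply] using this
    have e1 : Finsupp.single (0 : Fin 2) (x.1 0) = x.1 := fin2_single _ (by omega)
    have e2 : Finsupp.single (0 : Fin 2) (x.2 0) = x.2 := fin2_single _ (by omega)
    rw [coeff_specX, coeff_specX, e1, e2]

lemma specX_one : specX (1 : MvPowerSeries (Fin 2) R) = 1 := by
  ext k
  rw [coeff_specX]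
  simp [MvPowerSeries.coeff_one, PowerSeries.coeff_one, Finsupp.single_eq_zero]

/-- `specX` as a ring homomorphism. -/
def specXHom : MvPowerSeries (Fin 2) R →+* PowerSeries R where
  toFun := specX
  map_one' := specX_one
  map_mul' := specX_mul
  map_zero' := by ext k; simp [coeff_specX]
  map_add' a b := by ext k; simp [coeff_specX]

lemma specXHom_apply (φ : MvPowerSeries (Fin 2) R) : specXHom φ = specX φ := rfl

lemma specX_X0 : specX (MvPowerSeries.X 0 : MvPowerSeries (Fin 2) R) = PowerSeries.X := by
  ext k
  rw [coeff_specX]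
  rw [MvPowerSeries.X, MvPowerSeries.coeff_monomial, PowerSeries.coeff_X]
  by_cases h : k = 1
  · subst h; simp
  · rw [if_neg, if_neg h]
    intro hs
    have := congrArg (fun f : Fin 2 →₀ ℕ => f 0) hs
    simp [Finsupp.single_apply] at this
    exact h this

lemma specX_X1 : specX (MvPowerSeries.X 1 : MvPowerSeries (Fin 2) R) = 0 := by
  ext k
  rw [coeff_specX]
  rw [MvPowerSeries.X, MvPowerSeries.coeff_monomial]
  rw [if_neg, map_zero]
  intro hs
  have := congrArg (fun f : Fin 2 →₀ ℕ => f 1) hs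
  simp [Finsupp.single_apply] at this

end Aux

lemma coeff_specX_binomSer (N : ℤ_[p]) (k : ℕ) :
    PowerSeries.coeff (R := ℤ_[p]) k (specX (binomSer p 0 N)) = Ring.choose N k := by
  rw [coeff_specX]
  show binomSer p 0 N (Finsupp.single 0 k) = Ring.choose N k
  unfold binomSer
  simp

/-- Membership criterion for the ideal `(p, X^(p+1))`. -/
lemma mem_span_p_Xpow (f : PowerSeries ℤ_[p])
    (h : ∀ k ≤ p, (p : ℤ_[p]) ∣ PowerSeries.coeff (R := ℤ_[p]) k f) :
    f ∈ Ideal.span {((p : ℕ) : PowerSeries ℤ_[p]), PowerSeries.X ^ (p + 1)} := by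
  rw [Ideal.mem_span_pair]
  refine ⟨PowerSeries.mk fun k => if hk : k ≤ p then (h k hk).choose else 0,
    PowerSeries.mk fun k => PowerSeries.coeff (R := ℤ_[p]) (k + (p + 1)) f, ?_⟩
  have hp : ((p : ℕ) : PowerSeries ℤ_[p]) = PowerSeries.C (R := ℤ_[p]) ((p : ℕ) : ℤ_[p]) :=
    (map_natCast (PowerSeries.C (R := ℤ_[p])) p).symm
  ext k
  rw [map_add, hp, PowerSeries.coeff_mul_C, PowerSeries.coeff_mul_X_pow',
    PowerSeries.coeff_mk]
  by_cases hk : k ≤ p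
  · rw [dif_pos hk, if_neg (by omega), add_zero, mul_comm]
    exact ((h k hk).choose_spec).symm
  · rw [dif_neg hk, if_pos (by omega), PowerSeries.coeff_mk]
    rw [Nat.sub_add_cancel (by omega)]
    ring

lemma pdvd_ringChoose (N : ℤ_[p]) (hN : (p : ℤ_[p]) ∣ N) {k : ℕ} (h1 : k ≠ 0) (hk : k < p) :
    (p : ℤ_[p]) ∣ Ring.choose N k := by
  have hprime : Nat.Prime p := Fact.out
  have hfac : ¬ (p : ℤ_[p]) ∣ ((k.factorial : ℕ) : ℤ_[p]) := by
    intro hdvd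
    have h2 : ((p : ℤ_[p])) ^ 1 ∣ ((k.factorial : ℤ) : ℤ_[p]) := by
      rw [pow_one]; exact_mod_cast hdvd
    rw [PadicInt.pow_p_dvd_int_iff] at h2
    rw [pow_one] at h2
    have h3 : p ∣ k.factorial := Int.ofNat_dvd.mp h2
    have := (Nat.Prime.dvd_factorial hprime).mp h3
    omega
  have hd : (p : ℤ_[p]) ∣ (descPochhammer ℤ k).smeval N := by
    obtain ⟨m, rfl⟩ := Nat.exists_eq_succ_of_ne_zero h1
    rw [descPochhammer_succ_left, Polynomial.smeval_mul, Polynomial.smeval_X, pow_one]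
    exact Dvd.dvd.mul_right hN _
  rw [Ring.descPochhammer_eq_factorial_smul_choose, nsmul_eq_mul] at hd
  exact ((PadicInt.prime_p.dvd_mul).mp hd).resolve_left hfac

lemma ringChoose_zero (k : ℕ) (hk : k ≠ 0) : Ring.choose (0 : ℤ_[p]) k = 0 := by
  rw [show (0 : ℤ_[p]) = ((0 : ℕ) : ℤ_[p]) by simp, Ring.choose_natCast]
  rw [Nat.choose_eq_zero_of_lt (by omega)]

/-- Let `p` be a prime, `N ∈ pℤ_p`, and let `φ ∈ (X,Y)²·ℤ_p[[X,Y]]` be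
divisible in `ℤ_p[[X,Y]]` by `(1+X)^N - (1+Y)`.  Then `φ(X,0) ≡ 0` modulo the ideal
`(p, X^(p+1))` of `ℤ_p[[X]]`. -/
theorem statement9 (N : ℤ_[p]) (hN : (p : ℤ_[p]) ∣ N)
    (φ : MvPowerSeries (Fin 2) ℤ_[p])
    (hmem : φ ∈ (Ideal.span {(MvPowerSeries.X 0 : MvPowerSeries (Fin 2) ℤ_[p]),
      MvPowerSeries.X 1}) ^ 2)
    (hdvd : (binomSer p 0 N - (1 + MvPowerSeries.X 1)) ∣ φ) :
    specX φ ∈ Ideal.span {((p : ℕ) : PowerSeries ℤ_[p]), PowerSeries.X ^ (p + 1)} := by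
  obtain ⟨ψ, hφ⟩ := hdvd
  set G : PowerSeries ℤ_[p] := specX (binomSer p 0 N) with hGdef
  set h : PowerSeries ℤ_[p] := specX ψ with hhdef
  -- the specialization of the divisor
  have hdivspec : specX (binomSer p 0 N - (1 + MvPowerSeries.X 1)) = G - 1 := by
    have : (binomSer p 0 N - (1 + MvPowerSeries.X 1) : MvPowerSeries (Fin 2) ℤ_[p])
        = binomSer p 0 N - 1 - MvPowerSeries.X 1 := by ring
    rw [this]
    have h1 : specXHom (binomSer p 0 N - 1 - MvPowerSeries.X 1)
        = specXHom (binomSer p 0 N) - 1 - specXHom (MvPowerSeries.X 1) := by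
      rw [map_sub, map_sub, map_one]
    rw [specXHom_apply, specXHom_apply, specXHom_apply] at h1
    rw [h1, specX_X1, hGdef, sub_zero]
  have hspec : specX φ = (G - 1) * h := by
    rw [hφ, specX_mul, hdivspec]
  -- coefficients of G - 1
  have hG0 : PowerSeries.coeff (R := ℤ_[p]) 0 (G - 1) = 0 := by
    rw [map_sub, hGdef, coeff_specX_binomSer, Ring.choose_zero_right, PowerSeries.coeff_one]
    simp
  have hGk : ∀ k : ℕ, k ≠ 0 → PowerSeries.coeff (R := ℤ_[p]) k (G - 1) = Ring.choose N k := by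
    intro k hk
    rw [map_sub, hGdef, coeff_specX_binomSer, PowerSeries.coeff_one, if_neg hk, sub_zero]
  -- X^2 divides specX φ
  have hX2 : (PowerSeries.X : PowerSeries ℤ_[p]) ^ 2 ∣ specX φ := by
    have hmap := Ideal.mem_map_of_mem (specXHom (R := ℤ_[p])) hmem
    rw [Ideal.map_pow, Ideal.map_span] at hmap
    have himg : (specXHom (R := ℤ_[p])) ''
        {(MvPowerSeries.X 0 : MvPowerSeries (Fin 2) ℤ_[p]), MvPowerSeries.X 1}
        = {PowerSeries.X, 0} := by
      rw [Set.image_insert_eq, Set.image_singleton, specXHom_apply, specXHom_apply,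
        specX_X0, specX_X1]
    rw [himg] at hmap
    have hsp : Ideal.span ({PowerSeries.X, 0} : Set (PowerSeries ℤ_[p]))
        = Ideal.span {PowerSeries.X} := by
      rw [Set.pair_comm]; exact Submodule.span_insert_zero
    rw [hsp, Ideal.span_singleton_pow] at hmap
    exact Ideal.mem_span_singleton.mp hmap
  have hc1 : PowerSeries.coeff (R := ℤ_[p]) 1 (specX φ) = 0 :=
    PowerSeries.X_pow_dvd_iff.mp hX2 1 (by norm_num)
  -- N * h₀ = 0
  have hNh0 : N * PowerSeries.coeff (R := ℤ_[p]) 0 h = 0 := by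
    have := hc1
    rw [hspec, PowerSeries.coeff_mul] at this
    rw [Finset.Nat.sum_antidiagonal_eq_sum_range_succ_mk] at this
    rw [Finset.sum_range_succ, Finset.sum_range_succ, Finset.sum_range_zero] at this
    simp only [zero_add, hG0, zero_mul] at this
    rwa [hGk 1 one_ne_zero, Ring.choose_one_right, Nat.sub_self] at this
  -- conclusion via coefficientwise divisibility
  apply mem_span_p_Xpow
  intro k hk
  rw [hspec, PowerSeries.coeff_mul]
  apply Finset.dvd_sum
  intro x hx
  rw [Finset.HasAntidiagonal.mem_antidiagonal] at hx
  by_cases h0 : x.1 = 0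
  · rw [h0, hG0, zero_mul]
    exact dvd_zero _
  · by_cases hxp : x.1 = p
    · have hx2 : x.2 = 0 := by omega
      rw [hxp, hx2, hGk p (Nat.Prime.ne_zero Fact.out)]
      rcases mul_eq_zero.mp hNh0 with hN0 | hh0
      · rw [hN0, ringChoose_zero p p (Nat.Prime.ne_zero Fact.out), zero_mul]
        exact dvd_zero _
      · rw [hh0, mul_zero]
        exact dvd_zero _
    · have hlt : x.1 < p := by omega
      rw [hGk x.1 h0]
      exact Dvd.dvd.mul_right (pdvd_ringChoose p N hN h0 hlt) _

end
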